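/- The stoichiometric matrix of any RAF that is not itself a CAF possesses a square submatrix S* = S[X*, R*] that is well-formed and semipositive, with X* disjoint from the food set; consequently any such RAF is stoichiometrically autocatalytic. -/

import Mathlib

/-- A reaction network with an F-decomposition of its stoichiometric
coefficients: reactant coefficients `sm` and product coefficients `sp` are
decomposed as `sm = σm + k` (F-reactant part plus F-catalyst part) and
`sp = σp + k`, all nonnegative. -/
structure RNet (X R : Type*) where
  sm : X → R → ℝ
  sp : X → R → ℝ
  σm : X → R → ℝ
  σp : X → R → ℝ
  k : X → R → ℝ
  σm_nonneg : ∀ x r, 0 ≤ σm x r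
  σp_nonneg : ∀ x r, 0 ≤ σp x r
  k_nonneg : ∀ x r, 0 ≤ k x r
  sm_eq : ∀ x r, σm x r + k x r = sm x r
  sp_eq : ∀ x r, σp x r + k x r = sp x r

namespace RNet

variable {X R : Type*} (N : RNet X R)

/-- `x` is a reactant of `r`. -/
def reactant (x : X) (r : R) : Prop := 0 < N.sm x r

/-- `x` is a product of `r`. -/
def product (x : X) (r : R) : Prop := 0 < N.sp x r

/-- `x` is an F-reactant of `r`. -/
def Freactant (x : X) (r : R) : Prop := 0 < N.σm x r

/-- `x` is an F-product of `r`. -/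
def Fproduct (x : X) (r : R) : Prop := 0 < N.σp x r

/-- `x` is an F-catalyst of `r`. -/
def Fcatalyst (x : X) (r : R) : Prop := 0 < N.k x r

/-- `x` is a net-product of `r`. -/
def netProduct (x : X) (r : R) : Prop := N.sm x r < N.sp x r

/-- The support `X(R')` of a set of reactions: all their reactants and
products. -/
def support (R' : Set R) : Set X := {x | ∃ r ∈ R', N.reactant x r ∨ N.product x r}

/-- The subnetwork obtained by restricting to species `X'` and reactions `R'`. -/
def sub (X' : Set X) (R' : Set R) : RNet X' R' where
  sm := fun x r => N.sm x r
  sp := fun x r => N.sp x r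
  σm := fun x r => N.σm x r
  σp := fun x r => N.σp x r
  k := fun x r => N.k x r
  σm_nonneg := fun x r => N.σm_nonneg x r
  σp_nonneg := fun x r => N.σp_nonneg x r
  k_nonneg := fun x r => N.k_nonneg x r
  sm_eq := fun x r => N.sm_eq x r
  sp_eq := fun x r => N.sp_eq x r

end RNet

/-- Reflexively Autocatalytic Food-generated set (RAF): every reaction has an
F-catalyst (R1); every non-food F-catalyst is an F-product-but-not-F-reactant
of some reaction (R2); and there is a strict partial order under which every
non-food F-reactant of a reaction is an F-product-but-not-F-reactant of a
strictly earlier reaction (R3). -/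
def IsRAF {X R : Type*} (N : RNet X R) (F : Set X) : Prop :=
  (∀ r, ∃ x, N.Fcatalyst x r) ∧
  (∀ r x, N.Fcatalyst x r → x ∉ F →
    ∃ r', N.Fproduct x r' ∧ ¬ N.Freactant x r') ∧
  (∃ prec : R → R → Prop, IsStrictOrder R prec ∧
    ∀ r x, N.Freactant x r → x ∉ F →
      ∃ r', prec r' r ∧ N.Fproduct x r' ∧ ¬ N.Freactant x r')

/-- Constructively Autocatalytic Food-generated set (CAF): every reaction has an
F-catalyst, and there is a strict partial order under which every non-food
reactant (F-reactant or F-catalyst) of a reaction is an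
F-product-but-not-F-reactant of a strictly earlier reaction. -/
def IsCAF {X R : Type*} (N : RNet X R) (F : Set X) : Prop :=
  (∀ r, ∃ x, N.Fcatalyst x r) ∧
  (∃ prec : R → R → Prop, IsStrictOrder R prec ∧
    ∀ r x, (N.Freactant x r ∨ N.Fcatalyst x r) → x ∉ F →
      ∃ r', prec r' r ∧ N.Fproduct x r' ∧ ¬ N.Freactant x r')

section Aux

variable {X R : Type*}

/-- `x` is needed by `r`: it is an F-reactant or an F-catalyst of `r`. -/
def RNeed (N : RNet X R) (x : X) (r : R) : Prop := N.Freactant x r ∨ N.Fcatalyst x r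

/-- Staged generability of species from the food set. -/
def GenN (N : RNet X R) (F : Set X) : ℕ → X → Prop
  | 0, x => x ∈ F
  | n+1, x => GenN N F n x ∨
      ∃ r, N.Fproduct x r ∧ ¬ N.Freactant x r ∧ ∀ z, RNeed N z r → GenN N F n z

/-- Generability of species from the food set. -/
def Gen (N : RNet X R) (F : Set X) (x : X) : Prop := ∃ n, GenN N F n x

lemma genN_mono (N : RNet X R) (F : Set X) {n m : ℕ} (h : n ≤ m) {x : X}
    (hx : GenN N F n x) : GenN N F m x := by
  induction h with
  | refl => exact hx
  | step _ ih => exact Or.inl ih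

lemma gen_food (N : RNet X R) (F : Set X) {x : X} (h : x ∈ F) : Gen N F x := ⟨0, h⟩

lemma gen_step [Fintype X] (N : RNet X R) (F : Set X) {x : X} {r : R}
    (h : ∀ y, RNeed N y r → Gen N F y)
    (hp : N.Fproduct x r) (hn : ¬ N.Freactant x r) : Gen N F x := by
  classical
  set g : X → ℕ := fun y => if hy : Gen N F y then hy.choose else 0 with hg
  have hgs : ∀ y, Gen N F y → GenN N F (g y) y := by
    intro y hy
    simp only [hg, dif_pos hy]
    exact hy.choose_spec
  refine ⟨Finset.univ.sup g + 1, Or.inr ⟨r, hp, hn, fun z hz => ?_⟩⟩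
  exact genN_mono N F (Finset.le_sup (Finset.mem_univ z)) (hgs z (h z hz))

lemma caf_of_gen [Fintype X] (N : RNet X R) (F : Set X)
    (h1 : ∀ r, ∃ x, N.Fcatalyst x r)
    (hall : ∀ r z, RNeed N z r → Gen N F z) : IsCAF N F := by
  classical
  have hex : ∀ r : R, ∃ n, ∀ z, RNeed N z r → GenN N F n z := by
    intro r
    set g : X → ℕ := fun y => if hy : Gen N F y then hy.choose else 0 with hg
    have hgs : ∀ y, Gen N F y → GenN N F (g y) y := by
      intro y hy
      simp only [hg, dif_pos hy]
      exact hy.choose_spec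
    exact ⟨Finset.univ.sup g, fun z hz =>
      genN_mono N F (Finset.le_sup (Finset.mem_univ z)) (hgs z (hall r z hz))⟩
  set ρr : R → ℕ := fun r => Nat.find (hex r) with hρr
  have hρspec : ∀ r z, RNeed N z r → GenN N F (ρr r) z := fun r => Nat.find_spec (hex r)
  refine ⟨h1, fun a b => ρr a < ρr b,
    { irrefl := fun a => lt_irrefl _, trans := fun a b c => lt_trans }, ?_⟩
  intro r x hx hxF
  have hgx : Gen N F x := ⟨ρr r, hρspec r x hx⟩
  set m : ℕ := Nat.find hgx with hm
  have hmx : GenN N F m x := Nat.find_spec hgx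
  have hm1 : m ≠ 0 := by
    intro h0
    rw [h0] at hmx
    exact hxF hmx
  obtain ⟨m', hm'⟩ : ∃ m', m = m' + 1 := ⟨m - 1, by omega⟩
  rw [hm'] at hmx
  rcases hmx with hmx | ⟨rx, hpx, hnx, hneeds⟩
  · exact absurd hmx (Nat.find_min hgx (by omega))
  refine ⟨rx, ?_, hpx, hnx⟩
  have hle1 : ρr rx ≤ m' := Nat.find_min' (hex rx) hneeds
  have hle2 : m ≤ ρr r := Nat.find_min' hgx (hρspec r x hx)
  show ρr rx < ρr r
  omega

end Aux


/-- Main theorem: the stoichiometric matrix of a RAF that is not itself a CAF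
possesses a square, well-formed, semipositive submatrix `S[X*, R*]` with `X*`
disjoint from the food set; hence such a RAF is stoichiometrically
autocatalytic. -/
theorem stmt10 {X R : Type*} [Fintype X] [Fintype R] (N : RNet X R) (F : Set X)
    (hRAF : IsRAF N F) (hnCAF : ¬ IsCAF N F) :
    ∃ (Xs : Finset X) (Rs : Finset R),
      Xs.Nonempty ∧ Xs.card = Rs.card ∧
      (∀ x ∈ Xs, x ∉ F) ∧
      (∀ r ∈ Rs, (∃ m ∈ Xs, N.reactant m r) ∧ ∃ n ∈ Xs, N.product n r) ∧
      ∃ v : R → ℝ, (∀ r ∈ Rs, 0 < v r) ∧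
        ∀ m ∈ Xs, 0 < ∑ r ∈ Rs, (N.sp m r - N.sm m r) * v r := by
  classical
  obtain ⟨hR1, hR2, prec₀, hord, hR3⟩ := hRAF
  -- a rank function compatible with the RAF precedence order
  set ρ : R → ℕ := fun r => (Finset.univ.filter (fun r' => prec₀ r' r)).card with hρdef
  have hρmono : ∀ a b, prec₀ a b → ρ a < ρ b := by
    intro a b hab
    apply Finset.card_lt_card
    rw [Finset.ssubset_iff_of_subset]
    · refine ⟨a, ?_, ?_⟩
      · simp only [Finset.mem_filter, Finset.mem_univ, true_and]
        exact hab
      · simp only [Finset.mem_filter, Finset.mem_univ, true_and]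
        exact hord.toIrrefl.irrefl a
    · intro c hc
      simp only [Finset.mem_filter, Finset.mem_univ, true_and] at hc ⊢
      exact hord.toIsTrans.trans c a b hc hab
  have hBadF : ∀ z, ¬ Gen N F z → z ∉ F := fun z hz hf => hz (gen_food N F hf)
  -- a bad (non-generable, needed) species exists since the RAF is not a CAF
  have hbad0 : ∃ z r, RNeed N z r ∧ ¬ Gen N F z := by
    by_contra hc
    push_neg at hc
    exact hnCAF (caf_of_gen N F hR1 (fun r z h => hc z r h))
  obtain ⟨z₀, r₀, hz₀need, hz₀g⟩ := hbad0
  set Bad : X → Prop := fun z => ¬ Gen N F z ∧ ∃ r, RNeed N z r with hBaddef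
  have hz₀Bad : Bad z₀ := ⟨hz₀g, r₀, hz₀need⟩
  -- the minimal-rank producer of a bad species
  have hPex : ∀ z, ∃ q, Bad z → (N.Fproduct z q ∧ ¬ N.Freactant z q) ∧
      ∀ r', N.Fproduct z r' → ¬ N.Freactant z r' → ρ q ≤ ρ r' := by
    intro z
    by_cases hz : Bad z
    · obtain ⟨hzg, r, hzr⟩ := hz
      have hzF : z ∉ F := hBadF z hzg
      have hpe : ∃ r', N.Fproduct z r' ∧ ¬ N.Freactant z r' := by
        rcases hzr with h | h
        · obtain ⟨r', _, h1, h2⟩ := hR3 r z h hzF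
          exact ⟨r', h1, h2⟩
        · exact hR2 r z h hzF
      obtain ⟨r', hr'⟩ := hpe
      obtain ⟨q, hqmem, hqmin⟩ := Finset.exists_min_image
        (Finset.univ.filter (fun r'' => N.Fproduct z r'' ∧ ¬ N.Freactant z r'')) ρ
        ⟨r', by simp only [Finset.mem_filter, Finset.mem_univ, true_and]; exact hr'⟩
      simp only [Finset.mem_filter, Finset.mem_univ, true_and] at hqmem
      refine ⟨q, fun _ => ⟨hqmem, fun r'' h1 h2 => ?_⟩⟩
      exact hqmin r'' (by simp only [Finset.mem_filter, Finset.mem_univ, true_and]; exact ⟨h1, h2⟩)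
    · exact ⟨r₀, fun h => absurd h hz⟩
  choose P hP using hPex
  -- a choice of bad need for each reaction that has one
  have hNex : ∀ q : R, ∃ z, (∃ y, RNeed N y q ∧ ¬ Gen N F y) → (RNeed N z q ∧ ¬ Gen N F z) := by
    intro q
    by_cases h : ∃ y, RNeed N y q ∧ ¬ Gen N F y
    · obtain ⟨y, hy⟩ := h
      exact ⟨y, fun _ => hy⟩
    · exact ⟨z₀, fun hc => absurd hc h⟩
  choose Nr hNr using hNex
  -- the producer of a bad species has a bad need
  have hPbad : ∀ z, Bad z → ∃ y, RNeed N y (P z) ∧ ¬ Gen N F y := by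
    intro z hz
    by_contra hc
    push_neg at hc
    exact hz.1 (gen_step N F hc (hP z hz).1.1 (hP z hz).1.2)
  set next : X → X := fun z => Nr (P z) with hnextdef
  have hnexteq : ∀ y, next y = Nr (P y) := fun y => by rw [hnextdef]
  have hnext : ∀ z, Bad z → Bad (next z) ∧ RNeed N (next z) (P z) := by
    intro z hz
    have h := hNr (P z) (hPbad z hz)
    rw [hnexteq]
    exact ⟨⟨h.2, P z, h.1⟩, h.1⟩
  -- key rank property: the chosen producer strictly precedes any consumer
  have hkey : ∀ z, Bad z → ∀ r, N.Freactant z r → ρ (P z) < ρ r := by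
    intro z hz r hr
    obtain ⟨r', hprec, hp', hn'⟩ := hR3 r z hr (hBadF z hz.1)
    exact lt_of_le_of_lt ((hP z hz).2 r' hp' hn') (hρmono r' r hprec)
  -- the orbit of z₀ under `next` consists of bad species
  have hBadIter : ∀ n, Bad (next^[n] z₀) := by
    intro n
    induction n with
    | zero => exact hz₀Bad
    | succ n ih =>
      rw [Function.iterate_succ_apply']
      exact (hnext _ ih).1
  -- find a periodic point
  have hex2 : ∃ i j, i < j ∧ next^[i] z₀ = next^[j] z₀ := by
    obtain ⟨i, j, hij, hije⟩ := Finite.exists_ne_map_eq_of_infinite (fun n => next^[n] z₀)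
    rcases lt_or_gt_of_ne hij with h | h
    · exact ⟨i, j, h, hije⟩
    · exact ⟨j, i, h, hije.symm⟩
  obtain ⟨i, j, hij, hije⟩ := hex2
  set z : X := next^[i] z₀ with hzdef
  have hfixe : ∃ q, 0 < q ∧ next^[q] z = z := by
    refine ⟨j - i, by omega, ?_⟩
    rw [hzdef, ← Function.iterate_add_apply, show j - i + i = j by omega]
    exact hije.symm
  set p := Nat.find hfixe with hpdef
  obtain ⟨hppos, hpfix⟩ := Nat.find_spec hfixe
  have hpmin : ∀ q, 0 < q → q < p → next^[q] z ≠ z :=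
    fun q h1 h2 he => Nat.find_min hfixe h2 ⟨h1, he⟩
  have hBadt : ∀ t, Bad (next^[t] z) := by
    intro t
    rw [hzdef, ← Function.iterate_add_apply]
    exact hBadIter (t + i)
  have hinj : ∀ a b, a < p → b < p → next^[a] z = next^[b] z → a = b := by
    have haux : ∀ a b, a < b → b < p → next^[a] z ≠ next^[b] z := by
      intro a b hab hbp he
      have h1 : next^[p - b + a] z = z := by
        rw [Function.iterate_add_apply, he, ← Function.iterate_add_apply,
          show p - b + b = p by omega]
        exact hpfix
      exact hpmin (p - b + a) (by omega) (by omega) h1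
    intro a b hap hbp he
    rcases lt_trichotomy a b with h | h | h
    · exact absurd he (haux a b h hbp)
    · exact h
    · exact absurd he.symm (haux b a h hap)
  have hmod : ∀ t, t ≤ p → next^[t] z = next^[t % p] z := by
    intro t ht
    rcases eq_or_lt_of_le ht with h | h
    · rw [h, hpfix, Nat.mod_self, Function.iterate_zero_apply]
    · rw [Nat.mod_eq_of_lt h]
  set Xs : Finset X := (Finset.range p).image (fun t => next^[t] z) with hXsdef
  set Rs : Finset R := (Finset.range p).image (fun t => P (next^[t] z)) with hRsdef
  have hmemX : ∀ t, t < p → next^[t] z ∈ Xs := by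
    intro t ht
    rw [hXsdef]
    exact Finset.mem_image.2 ⟨t, Finset.mem_range.2 ht, rfl⟩
  have hmemX' : ∀ t, t ≤ p → next^[t] z ∈ Xs := by
    intro t ht
    rw [hmod t ht]
    exact hmemX _ (Nat.mod_lt _ hppos)
  have hXcard : Xs.card = p := by
    rw [hXsdef, Finset.card_image_of_injOn, Finset.card_range]
    intro a ha b hb he
    exact hinj a b (by simpa using ha) (by simpa using hb) he
  have hRcard : Rs.card = p := by
    rw [hRsdef, Finset.card_image_of_injOn, Finset.card_range]
    intro a ha b hb he
    have hap : a < p := by simpa using ha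
    have hbp : b < p := by simpa using hb
    have he' : P (next^[a] z) = P (next^[b] z) := he
    have h1 : next^[a + 1] z = next^[b + 1] z := by
      rw [Function.iterate_succ_apply', Function.iterate_succ_apply',
        hnexteq, hnexteq, he']
    have h2 : (a + 1) % p = (b + 1) % p := by
      refine hinj _ _ (Nat.mod_lt _ hppos) (Nat.mod_lt _ hppos) ?_
      rw [← hmod _ (by omega), ← hmod _ (by omega)]
      exact h1
    rcases eq_or_lt_of_le (show a + 1 ≤ p by omega) with hA | hA <;>
      rcases eq_or_lt_of_le (show b + 1 ≤ p by omega) with hB | hB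
    · omega
    · rw [hA, Nat.mod_self, Nat.mod_eq_of_lt hB] at h2; omega
    · rw [hB, Nat.mod_self, Nat.mod_eq_of_lt hA] at h2; omega
    · rw [Nat.mod_eq_of_lt hA, Nat.mod_eq_of_lt hB] at h2; omega
  have hXsne : Xs.Nonempty := Finset.card_pos.1 (by rw [hXcard]; exact hppos)
  have hBadX : ∀ m ∈ Xs, Bad m := by
    intro m hm
    rw [hXsdef] at hm
    obtain ⟨t, ht, rfl⟩ := Finset.mem_image.1 hm
    exact hBadt t
  have hPmem : ∀ m ∈ Xs, P m ∈ Rs := by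
    intro m hm
    rw [hXsdef] at hm
    obtain ⟨t, ht, rfl⟩ := Finset.mem_image.1 hm
    rw [hRsdef]
    exact Finset.mem_image.2 ⟨t, ht, rfl⟩
  -- the weight vector
  have hMnn : ∀ m : X, (0:ℝ) ≤ ∑ r ∈ Rs, N.σm m r :=
    fun m => Finset.sum_nonneg fun r _ => N.σm_nonneg m r
  set ε : ℝ := min 1 (Xs.inf' hXsne (fun m => N.σp m (P m) / (1 + ∑ r ∈ Rs, N.σm m r)))
    with hεdef
  have hεpos : 0 < ε := by
    rw [hεdef]
    refine lt_min one_pos ((Finset.lt_inf'_iff hXsne).2 fun m hm => ?_)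
    exact div_pos (hP m (hBadX m hm)).1.1 (by linarith [hMnn m])
  have hεle1 : ε ≤ 1 := by rw [hεdef]; exact min_le_left _ _
  have hεlec : ∀ m ∈ Xs, ε ≤ N.σp m (P m) / (1 + ∑ r ∈ Rs, N.σm m r) := by
    intro m hm
    rw [hεdef]
    exact le_trans (min_le_right _ _) (Finset.inf'_le _ hm)
  refine ⟨Xs, Rs, hXsne, by rw [hXcard, hRcard], ?_, ?_, fun r => ε ^ ρ r,
    fun r _ => pow_pos hεpos _, ?_⟩
  · -- disjoint from food
    intro x hx
    exact hBadF x (hBadX x hx).1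
  · -- well-formedness
    intro r hr
    rw [hRsdef] at hr
    obtain ⟨t, ht, rfl⟩ := Finset.mem_image.1 hr
    have htp : t < p := by simpa using ht
    have hBt := hBadt t
    constructor
    · refine ⟨next (next^[t] z), ?_, ?_⟩
      · have hit : next (next^[t] z) = next^[t + 1] z :=
          (Function.iterate_succ_apply' next t z).symm
        rw [hit]
        exact hmemX' (t + 1) (by omega)
      · have hneed := (hnext _ hBt).2
        show 0 < N.sm _ _
        rw [← N.sm_eq]
        rcases hneed with h | h
        · have := N.k_nonneg (next (next^[t] z)) (P (next^[t] z))
          have h' : 0 < N.σm (next (next^[t] z)) (P (next^[t] z)) := h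
          linarith
        · have := N.σm_nonneg (next (next^[t] z)) (P (next^[t] z))
          have h' : 0 < N.k (next (next^[t] z)) (P (next^[t] z)) := h
          linarith
    · refine ⟨next^[t] z, hmemX t htp, ?_⟩
      show 0 < N.sp _ _
      rw [← N.sp_eq]
      have h1 : 0 < N.σp (next^[t] z) (P (next^[t] z)) := (hP _ hBt).1.1
      have h2 := N.k_nonneg (next^[t] z) (P (next^[t] z))
      linarith
  · -- semipositivity
    intro m hm
    have hBm := hBadX m hm
    have hqR : P m ∈ Rs := hPmem m hm
    have hσp : 0 < N.σp m (P m) := (hP m hBm).1.1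
    have hσm0 : N.σm m (P m) = 0 :=
      le_antisymm (not_lt.1 (hP m hBm).1.2) (N.σm_nonneg m (P m))
    have hrw : ∀ r ∈ Rs, (N.sp m r - N.sm m r) * ε ^ ρ r
        = (N.σp m r - N.σm m r) * ε ^ ρ r := by
      intro r _
      have h1 := N.sm_eq m r
      have h2 := N.sp_eq m r
      have : N.sp m r - N.sm m r = N.σp m r - N.σm m r := by linarith
      rw [this]
    rw [Finset.sum_congr rfl hrw]
    have hkey2 : ∀ r ∈ Rs.erase (P m),
        -(N.σm m r) * ε ^ (ρ (P m) + 1) ≤ (N.σp m r - N.σm m r) * ε ^ ρ r := by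
      intro r _
      rcases eq_or_lt_of_le (N.σm_nonneg m r) with h0 | hpos
      · rw [← h0]
        simp only [neg_zero, zero_mul, sub_zero]
        exact mul_nonneg (N.σp_nonneg m r) (pow_nonneg hεpos.le _)
      · have hlt : ρ (P m) + 1 ≤ ρ r := hkey m hBm r hpos
        have hpow : ε ^ ρ r ≤ ε ^ (ρ (P m) + 1) :=
          pow_le_pow_of_le_one hεpos.le hεle1 hlt
        have hpow0 : (0:ℝ) ≤ ε ^ ρ r := pow_nonneg hεpos.le _
        nlinarith [mul_nonneg hpos.le (sub_nonneg.2 hpow),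
          mul_nonneg (N.σp_nonneg m r) hpow0]
    have hsplit : ∑ r ∈ Rs, (N.σp m r - N.σm m r) * ε ^ ρ r
        = (N.σp m (P m) - N.σm m (P m)) * ε ^ ρ (P m)
          + ∑ r ∈ Rs.erase (P m), (N.σp m r - N.σm m r) * ε ^ ρ r :=
      (Finset.add_sum_erase Rs _ hqR).symm
    have hsum2 : ∑ r ∈ Rs.erase (P m), -(N.σm m r) * ε ^ (ρ (P m) + 1)
        ≤ ∑ r ∈ Rs.erase (P m), (N.σp m r - N.σm m r) * ε ^ ρ r :=
      Finset.sum_le_sum hkey2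
    have hsum3 : ∑ r ∈ Rs.erase (P m), -(N.σm m r) * ε ^ (ρ (P m) + 1)
        = -(∑ r ∈ Rs.erase (P m), N.σm m r) * ε ^ (ρ (P m) + 1) := by
      rw [← Finset.sum_mul, ← Finset.sum_neg_distrib]
    have hsum4 : ∑ r ∈ Rs.erase (P m), N.σm m r ≤ ∑ r ∈ Rs, N.σm m r :=
      Finset.sum_le_sum_of_subset_of_nonneg (Finset.erase_subset _ _)
        (fun r h _ => N.σm_nonneg m r)
    have hεM : ε * (1 + ∑ r ∈ Rs, N.σm m r) ≤ N.σp m (P m) :=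
      (le_div_iff₀ (by linarith [hMnn m])).1 (hεlec m hm)
    have hpowpos : 0 < ε ^ ρ (P m) := pow_pos hεpos _
    have hpows : ε ^ (ρ (P m) + 1) = ε ^ ρ (P m) * ε := pow_succ ε (ρ (P m))
    have hbound : -(∑ r ∈ Rs, N.σm m r) * ε ^ (ρ (P m) + 1)
        ≤ -(∑ r ∈ Rs.erase (P m), N.σm m r) * ε ^ (ρ (P m) + 1) := by
      have := pow_nonneg hεpos.le (ρ (P m) + 1)
      nlinarith
    have hfin : 0 < N.σp m (P m) * ε ^ ρ (P m)
        + (-(∑ r ∈ Rs, N.σm m r)) * ε ^ (ρ (P m) + 1) := by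
      nlinarith [mul_le_mul_of_nonneg_right hεM hpowpos.le, mul_pos hεpos hpowpos]
    rw [hsplit, hσm0, sub_zero]
    linarith
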